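/- If N = (p_1 p_2 ⋯ p_t)^{2a} = m^2 is a quasiperfect number (where p_1, ..., p_t are distinct primes and a is a positive integer), then for every i ∈ {1, ..., t}, the integer p_i^2 + p_i + 1 divides σ(N) = 2m^2 + 1 and has no prime factor congruent to 7 or 13 modulo 24. -/

import Mathlib

/-- A positive integer `N` is quasiperfect if `σ(N) = 2N + 1`. -/
def Quasiperfect (N : ℕ) : Prop :=
  0 < N ∧ ArithmeticFunction.sigma 1 N = 2 * N + 1

/-- Geometric sum with an odd number of terms, when `p ^ 2 = 1`. -/
lemma qp_geom_sum_sq_one {R : Type*} [CommRing R] (p : R) (hp : p ^ 2 = 1) (a : ℕ) :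
    ∑ j ∈ Finset.range (2 * a + 1), p ^ j = 1 + (a : R) * (p + 1) := by
  induction a with
  | zero => simp
  | succ a ih =>
    have h2 : 2 * (a + 1) + 1 = (2 * a + 1) + 1 + 1 := by ring
    have he : p ^ (2 * a) = 1 := by
      rw [pow_mul, hp, one_pow]
    rw [h2, Finset.sum_range_succ, Finset.sum_range_succ, ih]
    have h3 : p ^ (2 * a + 1) = p := by rw [pow_succ, he, one_mul]
    have h4 : p ^ (2 * a + 1 + 1) = 1 := by rw [pow_succ, h3, ← sq, hp]
    rw [h3, h4]
    push_cast
    ring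

/-- `p ^ 2 + p + 1` divides a geometric sum whose number of terms is a multiple of 3. -/
lemma qp_dvd_geom_sum3 (p b : ℕ) :
    (p ^ 2 + p + 1) ∣ ∑ j ∈ Finset.range (3 * b), p ^ j := by
  induction b with
  | zero => simp
  | succ b ih =>
    have h2 : 3 * (b + 1) = (3 * b) + 1 + 1 + 1 := by ring
    have heq : ∑ j ∈ Finset.range (3 * (b + 1)), p ^ j =
        (∑ j ∈ Finset.range (3 * b), p ^ j) + p ^ (3 * b) * (p ^ 2 + p + 1) := by
      rw [h2, Finset.sum_range_succ, Finset.sum_range_succ, Finset.sum_range_succ]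
      ring
    rw [heq]
    exact dvd_add ih (Dvd.intro_left _ rfl)

/-- Any prime dividing `2 m ^ 2 + 1` is `1` or `3` mod `8`. -/
lemma qp_prime_dvd_mod8 {q m : ℕ} (hq : q.Prime) (hdvd : q ∣ 2 * m ^ 2 + 1) :
    q % 8 = 1 ∨ q % 8 = 3 := by
  have hq2 : q ≠ 2 := by
    rintro rfl
    obtain ⟨k, hk⟩ := hdvd
    omega
  haveI : Fact q.Prime := ⟨hq⟩
  have h0 : ((2 * m ^ 2 + 1 : ℕ) : ZMod q) = 0 :=
    (ZMod.natCast_eq_zero_iff _ _).mpr hdvd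
  push_cast at h0
  have hsq : IsSquare (-2 : ZMod q) := by
    refine ⟨2 * (m : ZMod q), ?_⟩
    linear_combination (-2 : ZMod q) * h0
  exact (ZMod.exists_sq_eq_neg_two_iff hq2).mp hsq

/-- A nonzero natural all of whose prime factors are `1` or `3` mod `8`
is itself `1` or `3` mod `8`. -/
lemma qp_mod8_closed (n : ℕ) (hn : n ≠ 0)
    (h : ∀ q : ℕ, q.Prime → q ∣ n → q % 8 = 1 ∨ q % 8 = 3) :
    n % 8 = 1 ∨ n % 8 = 3 := by
  induction n using Nat.strong_induction_on with
  | _ n ih =>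
    rcases eq_or_ne n 1 with rfl | h1
    · left; rfl
    · have hp := Nat.minFac_prime h1
      obtain ⟨k, hk⟩ := Nat.minFac_dvd n
      have hk0 : k ≠ 0 := by rintro rfl; simp at hk; exact hn hk
      have hklt : k < n := by
        have h2 : 2 ≤ n.minFac := hp.two_le
        have : 1 * k < n.minFac * k :=
          Nat.mul_lt_mul_of_lt_of_le hp.one_lt (le_refl k) (Nat.pos_of_ne_zero hk0)
        omega
      have hkfac : ∀ q : ℕ, q.Prime → q ∣ k → q % 8 = 1 ∨ q % 8 = 3 := by
        intro q hqp hqk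
        exact h q hqp (hk ▸ Dvd.dvd.mul_left hqk _)
      have hkmod := ih k hklt hk0 hkfac
      have hq8 := h n.minFac hp (Nat.minFac_dvd n)
      rw [hk, Nat.mul_mod]
      rcases hq8 with h'|h' <;> rcases hkmod with h''|h'' <;> rw [h', h''] <;> norm_num

/-- For odd `p`, `p ^ 2 = 1` in `ZMod 8`. -/
lemma qp_sq_one_zmod8 {p : ℕ} (hodd : p % 2 = 1) : ((p : ZMod 8)) ^ 2 = 1 := by
  have h8 : p % 8 = 1 ∨ p % 8 = 3 ∨ p % 8 = 5 ∨ p % 8 = 7 := by omega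
  have := (ZMod.natCast_mod p 8).symm
  rw [this]
  rcases h8 with h|h|h|h <;> rw [h] <;> decide

/-- For `p` not divisible by 3, `p ^ 2 = 1` in `ZMod 3`. -/
lemma qp_sq_one_zmod3 {p : ℕ} (h3 : ¬ 3 ∣ p) : ((p : ZMod 3)) ^ 2 = 1 := by
  have h' : p % 3 = 1 ∨ p % 3 = 2 := by omega
  have := (ZMod.natCast_mod p 3).symm
  rw [this]
  rcases h' with h|h <;> rw [h] <;> decide

/-- If `N = (p₁ p₂ ⋯ p_t)^{2a} = m²` is quasiperfect, then for every `i`,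
`p i ^ 2 + p i + 1` divides `σ(N) = 2 m² + 1` and has no prime factor congruent
to `7` or `13` modulo `24`. -/
theorem stmt_6 (t : ℕ) (p : Fin t → ℕ) (a N m : ℕ)
    (hp : ∀ i, (p i).Prime) (hinj : Function.Injective p)
    (ha : 0 < a)
    (hN : N = (∏ i, p i) ^ (2 * a)) (hm : N = m ^ 2)
    (hq : Quasiperfect N) :
    ArithmeticFunction.sigma 1 N = 2 * m ^ 2 + 1 ∧
      ∀ i : Fin t, (p i ^ 2 + p i + 1) ∣ 2 * m ^ 2 + 1 ∧
        ∀ q : ℕ, q.Prime → q ∣ p i ^ 2 + p i + 1 → q % 24 ≠ 7 ∧ q % 24 ≠ 13 := by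
  classical
  obtain ⟨hN0, hsig⟩ := hq
  have hmain : ArithmeticFunction.sigma 1 N = 2 * m ^ 2 + 1 := by rw [hsig, hm]
  -- multiplicativity
  have hNprod : N = ∏ i, (p i) ^ (2 * a) := by rw [hN, Finset.prod_pow]
  have hpair : (↑(Finset.univ : Finset (Fin t)) : Set (Fin t)).Pairwise
      (Function.onFun Nat.Coprime fun i => (p i) ^ (2 * a)) := by
    intro i _ j _ hij
    exact Nat.Coprime.pow _ _ ((Nat.coprime_primes (hp i) (hp j)).mpr
      (fun h => hij (hinj h)))
  have hsigprod : ArithmeticFunction.sigma 1 N =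
      ∏ i, ArithmeticFunction.sigma 1 ((p i) ^ (2 * a)) := by
    rw [hNprod]
    exact ArithmeticFunction.IsMultiplicative.map_prod _
      ArithmeticFunction.isMultiplicative_sigma _ hpair
  have hdvd_i : ∀ i : Fin t,
      ArithmeticFunction.sigma 1 ((p i) ^ (2 * a)) ∣ 2 * m ^ 2 + 1 := by
    intro i
    rw [← hmain, hsigprod]
    exact Finset.dvd_prod_of_mem _ (Finset.mem_univ i)
  have hσ : ∀ i : Fin t, ArithmeticFunction.sigma 1 ((p i) ^ (2 * a)) =
      ∑ j ∈ Finset.range (2 * a + 1), (p i) ^ j := fun i =>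
    ArithmeticFunction.sigma_one_apply_prime_pow (hp i)
  -- each sigma factor is 1 or 3 mod 8
  have hσmod8 : ∀ i : Fin t,
      ArithmeticFunction.sigma 1 ((p i) ^ (2 * a)) % 8 = 1 ∨
      ArithmeticFunction.sigma 1 ((p i) ^ (2 * a)) % 8 = 3 := by
    intro i
    refine qp_mod8_closed _ ?_ ?_
    · intro h0
      have := hdvd_i i
      rw [h0] at this
      omega
    · intro q hqp hqd
      exact qp_prime_dvd_mod8 hqp (hqd.trans (hdvd_i i))
  -- translate to ZMod 8
  have hσmod8' : ∀ i : Fin t,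
      ((ArithmeticFunction.sigma 1 ((p i) ^ (2 * a)) : ℕ) : ZMod 8) = 1 ∨
      ((ArithmeticFunction.sigma 1 ((p i) ^ (2 * a)) : ℕ) : ZMod 8) = 3 := by
    intro i
    rcases hσmod8 i with h|h <;>
      [left; right] <;>
      rw [← ZMod.natCast_mod, h] <;> rfl
  -- all primes are odd
  have hpodd : ∀ i : Fin t, p i % 2 = 1 := by
    intro i
    by_contra hcon
    have hp2 : p i = 2 := by
      have := (hp i).two_le
      have heven : p i % 2 = 0 := by omega
      have : (2 : ℕ) ∣ p i := Nat.dvd_of_mod_eq_zero heven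
      exact ((Nat.prime_dvd_prime_iff_eq Nat.prime_two (hp i)).mp this).symm
    -- σ(2^{2a}) ≡ 7 mod 8
    have hcast : ((ArithmeticFunction.sigma 1 ((p i) ^ (2 * a)) : ℕ) : ZMod 8) = 7 := by
      rw [hσ i, hp2]
      have h2a : 2 * a + 1 = 3 + (2 * a - 2) := by omega
      push_cast
      rw [h2a, Finset.sum_range_add]
      have h1 : ∑ j ∈ Finset.range 3, (2 : ZMod 8) ^ j = 7 := by decide
      have h2 : ∀ j ∈ Finset.range (2 * a - 2), (2 : ZMod 8) ^ (3 + j) = 0 := by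
        intro j _
        rw [pow_add, show ((2 : ZMod 8)) ^ 3 = 0 from rfl, zero_mul]
      rw [h1, Finset.sum_congr rfl h2]
      simp
    rcases hσmod8' i with h|h <;> rw [hcast] at h <;> exact absurd h (by decide)
  -- sigma factor formula in ZMod 8
  have hσ8 : ∀ i : Fin t,
      ((ArithmeticFunction.sigma 1 ((p i) ^ (2 * a)) : ℕ) : ZMod 8) =
        1 + (a : ZMod 8) * ((p i : ZMod 8) + 1) := by
    intro i
    rw [hσ i]
    push_cast
    exact qp_geom_sum_sq_one _ (qp_sq_one_zmod8 (hpodd i)) a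
  -- N ≡ 1 mod 8, so σ(N) ≡ 3 mod 8
  have hmodd : m % 2 = 1 := by
    by_contra hcon
    have hme : m % 2 = 0 := by omega
    obtain ⟨k, hk⟩ := Nat.dvd_of_mod_eq_zero hme
    have h2N : (2 : ℕ) ∣ N := by
      rw [hm, hk]
      exact ⟨2 * k ^ 2, by ring⟩
    rw [hNprod] at h2N
    obtain ⟨i, _, hdvd2⟩ := Prime.exists_mem_finset_dvd Nat.prime_two.prime h2N
    have hdp : (2 : ℕ) ∣ p i := Nat.Prime.dvd_of_dvd_pow Nat.prime_two hdvd2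
    have hoi := hpodd i
    omega
  have hsigN8 : ((ArithmeticFunction.sigma 1 N : ℕ) : ZMod 8) = 3 := by
    rw [hmain]
    push_cast
    have : ((m : ZMod 8)) ^ 2 = 1 := qp_sq_one_zmod8 hmodd
    rw [this]
    norm_num
  -- a is odd
  have haodd : a % 2 = 1 := by
    by_contra hcon
    have hae : a % 2 = 0 := by omega
    obtain ⟨c, hc⟩ := Nat.dvd_of_mod_eq_zero hae
    -- each factor ≡ 1 mod 8
    have hfac1 : ∀ i : Fin t,
        ((ArithmeticFunction.sigma 1 ((p i) ^ (2 * a)) : ℕ) : ZMod 8) = 1 := by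
      intro i
      have hform := hσ8 i
      have hpe : (p i + 1) % 2 = 0 := by have := hpodd i; omega
      obtain ⟨d, hd⟩ := Nat.dvd_of_mod_eq_zero hpe
      have h4 : (a : ZMod 8) * ((p i : ZMod 8) + 1) = 4 * ((c : ZMod 8) * (d : ZMod 8)) := by
        have : ((a * (p i + 1) : ℕ) : ZMod 8) = ((4 * (c * d) : ℕ) : ZMod 8) := by
          rw [hc, hd]; push_cast; ring_nf
        push_cast at this
        linear_combination this
      have h45 : ∀ y : ZMod 8, 4 * y = 0 ∨ 4 * y = 4 := by decide
      rcases hσmod8' i with h|h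
      · exact h
      · exfalso
        rw [hform, h4] at h
        rcases h45 ((c : ZMod 8) * (d : ZMod 8)) with h'|h' <;> rw [h'] at h <;>
          exact absurd h (by decide)
    have : ((ArithmeticFunction.sigma 1 N : ℕ) : ZMod 8) = 1 := by
      rw [hsigprod]
      push_cast
      rw [Finset.prod_congr rfl (fun i _ => hfac1 i)]
      simp
    rw [hsigN8] at this
    exact absurd this (by decide)
  -- no p i equals 3
  have hp3 : ∀ i : Fin t, p i ≠ 3 := by
    intro i hpi3
    have hform := hσ8 i
    have hc3 : ((p i : ℕ) : ZMod 8) = 3 := by rw [hpi3]; decide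
    rw [hc3] at hform
    have ha8 : (a : ZMod 8) * ((3 : ZMod 8) + 1) = 4 := by
      have h8 : a % 8 = 1 ∨ a % 8 = 3 ∨ a % 8 = 5 ∨ a % 8 = 7 := by omega
      rw [show ((a : ℕ) : ZMod 8) = ((a % 8 : ℕ) : ZMod 8) from (ZMod.natCast_mod a 8).symm]
      rcases h8 with h|h|h|h <;> rw [h] <;> decide
    rw [ha8] at hform
    have hform' : ((ArithmeticFunction.sigma 1 ((p i) ^ (2 * a)) : ℕ) : ZMod 8) = 5 := by
      rw [hform]; decide
    rcases hσmod8' i with h|h <;> rw [hform'] at h <;> exact absurd h (by decide)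
  -- 3 does not divide m
  have h3m : ¬ (3 : ℕ) ∣ m := by
    intro h3m
    have h3N : (3 : ℕ) ∣ N := by
      obtain ⟨k, hk⟩ := h3m
      rw [hm, hk]
      exact ⟨3 * k ^ 2, by ring⟩
    rw [hNprod] at h3N
    obtain ⟨i, _, hdvd3⟩ := Prime.exists_mem_finset_dvd Nat.prime_three.prime h3N
    have h3p : (3 : ℕ) ∣ p i := Nat.Prime.dvd_of_dvd_pow Nat.prime_three hdvd3
    exact hp3 i ((Nat.prime_dvd_prime_iff_eq Nat.prime_three (hp i)).mp h3p).symm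
  -- 3 divides 2m²+1, hence divides some sigma factor
  have h3sig : (3 : ℕ) ∣ 2 * m ^ 2 + 1 := by
    have : ((2 * m ^ 2 + 1 : ℕ) : ZMod 3) = 0 := by
      push_cast
      have := qp_sq_one_zmod3 h3m
      rw [this]
      decide
    exact (ZMod.natCast_eq_zero_iff _ _).mp this
  have h3prod : (3 : ℕ) ∣ ∏ i, ArithmeticFunction.sigma 1 ((p i) ^ (2 * a)) := by
    rw [← hsigprod, hmain]; exact h3sig
  -- 3 ∣ 2a+1
  have h3a : (3 : ℕ) ∣ 2 * a + 1 := by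
    obtain ⟨i, _, h3i⟩ := Prime.exists_mem_finset_dvd Nat.prime_three.prime h3prod
    have h3pi : ¬ (3 : ℕ) ∣ p i := by
      intro h
      exact hp3 i ((Nat.prime_dvd_prime_iff_eq Nat.prime_three (hp i)).mp h).symm
    have h0 : ((ArithmeticFunction.sigma 1 ((p i) ^ (2 * a)) : ℕ) : ZMod 3) = 0 :=
      (ZMod.natCast_eq_zero_iff _ _).mpr h3i
    rw [hσ i] at h0
    push_cast at h0
    rw [qp_geom_sum_sq_one _ (qp_sq_one_zmod3 h3pi) a] at h0
    -- p i mod 3 is 1 or 2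
    have hpi' : p i % 3 = 1 ∨ p i % 3 = 2 := by
      have hne : p i % 3 ≠ 0 := fun h => h3pi (Nat.dvd_of_mod_eq_zero h)
      omega
    have hcast : (p i : ZMod 3) = ((p i % 3 : ℕ) : ZMod 3) := (ZMod.natCast_mod _ _).symm
    rcases hpi' with h|h
    · -- p ≡ 1 mod 3: 0 = 1 + a*2, so 2a+1 ≡ 0 mod 3
      rw [hcast, h] at h0
      have : ((2 * a + 1 : ℕ) : ZMod 3) = 0 := by
        push_cast
        push_cast at h0
        linear_combination h0
      exact (ZMod.natCast_eq_zero_iff _ _).mp this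
    · -- p ≡ 2 mod 3: 0 = 1 + a*0 = 1, contradiction
      exfalso
      rw [hcast, h] at h0
      have h20 : ((2 : ℕ) : ZMod 3) + 1 = 0 := by decide
      rw [h20, mul_zero, add_zero] at h0
      exact one_ne_zero h0
  -- final assembly
  refine ⟨hmain, fun i => ?_⟩
  obtain ⟨b, hb⟩ := h3a
  have hdvdD : (p i ^ 2 + p i + 1) ∣ 2 * m ^ 2 + 1 := by
    refine dvd_trans ?_ (hdvd_i i)
    rw [hσ i, hb]
    exact qp_dvd_geom_sum3 (p i) b
  refine ⟨hdvdD, fun q hqp hqd => ?_⟩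
  have hq8 := qp_prime_dvd_mod8 hqp (hqd.trans hdvdD)
  omega
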